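/- For every odd prime p, the coefficient of x^{p-1} y^{p-1} z^{p-1} in the polynomial (∑_{i=0}^{p-1} (-1)^i y^i z^{p-1-i}) · (∑_{j=0}^{p-1} (-1)^j z^j x^{p-1-j}) · (∑_{k=0}^{p-1} (-1)^k x^k y^{p-1-k}) equals 1. -/
import Mathlib


open MvPolynomial

theorem coeff_triple_product (p : ℕ) (hp : p.Prime) (hodd : Odd p) :
    MvPolynomial.coeff (Finsupp.equivFunOnFinite.symm fun _ : Fin 3 => p - 1)
      ((∑ i ∈ Finset.range p, (-1 : MvPolynomial (Fin 3) ℤ) ^ i * X 1 ^ i * X 2 ^ (p - 1 - i)) *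
       (∑ j ∈ Finset.range p, (-1 : MvPolynomial (Fin 3) ℤ) ^ j * X 2 ^ j * X 0 ^ (p - 1 - j)) *
       (∑ k ∈ Finset.range p, (-1 : MvPolynomial (Fin 3) ℤ) ^ k * X 0 ^ k * X 1 ^ (p - 1 - k))) = 1 := by
  classical
  obtain ⟨q, rfl⟩ : ∃ q, p = q + 1 := ⟨p - 1, (Nat.succ_pred_eq_of_pos hp.pos).symm⟩
  simp only [Nat.add_sub_cancel]
  have hterm : ∀ (a b : Fin 3) (i : ℕ),
      (-1 : MvPolynomial (Fin 3) ℤ) ^ i * X a ^ i * X b ^ (q - i)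
        = monomial (Finsupp.single a i + Finsupp.single b (q - i)) ((-1 : ℤ) ^ i) := by
    intro a b i
    rw [X_pow_eq_monomial, X_pow_eq_monomial, ← C_1 (σ := Fin 3), ← C_neg, ← C_pow,
      C_mul_monomial, monomial_mul]
    simp
  simp only [hterm]
  rw [Finset.sum_mul_sum, Finset.sum_mul]
  simp only [Finset.sum_mul, Finset.mul_sum, monomial_mul, coeff_sum, coeff_monomial]
  have hcond : ∀ i j k : ℕ, i ≤ q → j ≤ q → k ≤ q →
      ((Finsupp.single (1 : Fin 3) i + Finsupp.single 2 (q - i) +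
        (Finsupp.single 2 j + Finsupp.single 0 (q - j)) +
        (Finsupp.single 0 k + Finsupp.single 1 (q - k))
          = Finsupp.equivFunOnFinite.symm fun _ : Fin 3 => q) ↔ (j = i ∧ k = i)) := by
    intro i j k hi hj hk
    rw [Finsupp.ext_iff]
    constructor
    · intro h
      have h0 := h 0; have h1 := h 1; have h2 := h 2
      simp [Finsupp.single_apply] at h0 h1 h2
      omega
    · rintro ⟨rfl, rfl⟩
      intro a
      fin_cases a <;> simp [Finsupp.single_apply] <;> omega
  have step : ∀ i ∈ Finset.range (q + 1),
      (∑ k ∈ Finset.range (q + 1), ∑ j ∈ Finset.range (q + 1),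
        if Finsupp.single (1 : Fin 3) i + Finsupp.single 2 (q - i) +
            (Finsupp.single 2 j + Finsupp.single 0 (q - j)) +
            (Finsupp.single 0 k + Finsupp.single 1 (q - k))
            = Finsupp.equivFunOnFinite.symm (fun _ : Fin 3 => q)
          then (-1 : ℤ) ^ i * (-1) ^ j * (-1) ^ k else 0) = (-1 : ℤ) ^ i := by
    intro i hi
    rw [Finset.mem_range] at hi
    have hi' : i ≤ q := by omega
    have key : ∀ k ∈ Finset.range (q + 1), ∀ j ∈ Finset.range (q + 1),
        (if Finsupp.single (1 : Fin 3) i + Finsupp.single 2 (q - i) +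
            (Finsupp.single 2 j + Finsupp.single 0 (q - j)) +
            (Finsupp.single 0 k + Finsupp.single 1 (q - k))
            = Finsupp.equivFunOnFinite.symm (fun _ : Fin 3 => q)
          then (-1 : ℤ) ^ i * (-1) ^ j * (-1) ^ k else 0)
        = (if j = i then (if k = i then (-1 : ℤ) ^ i * (-1) ^ j * (-1) ^ k else 0) else 0) := by
      intro k hk j hj
      rw [Finset.mem_range] at hj hk
      simp only [hcond i j k hi' (by omega) (by omega)]
      by_cases h1 : j = i <;> by_cases h2 : k = i <;> simp [h1, h2]
    rw [Finset.sum_congr rfl fun k hk => Finset.sum_congr rfl fun j hj => key k hk j hj]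
    simp only [Finset.sum_ite_eq' (Finset.range (q + 1))]
    simp [Finset.mem_range.mpr hi, ← pow_add]
  rw [Finset.sum_congr rfl step, neg_one_geom_sum]
  rw [if_neg (Nat.not_even_iff_odd.mpr hodd)]
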